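/- Principal cubes maximal bound: Let σ be a measure, f ≥ 0 σ-integrable locally, and let Γ be a countable family of cubes with the property that for each point x and each (t,u) ∈ Γ with x ∈ Q^t_u, the numbers T^t_u := σ(2Q^t_u)^{−1} ∫_{Q^t_u} f dμ satisfy: whenever Q^k_i ⊊ Q^t_u with both in Γ then T^k_i > 2 T^t_u. Then for every x, Σ_{(t,u)∈Γ : x∈Q^t_u} (T^t_u)^{p−1} ≤ C_p (sup_{(t,u)∈Γ : x∈Q^t_u} T^t_u)^{p−1} for p > 1, with C_p = Σ_{j≥0} 2^{−j(p−1)} = (1 − 2^{1−p})^{−1}; consequently Σ_{(t,u)∈Γ} (T^t_u)^{p−1} m_{σ,Q^t_u}(g) χ_{Q^t_u}(x) ≤ C_p (M^d_σ g(x)) · (sup_{(t,u)∈Γ:x∈Q^t_u} T^t_u)^{p−1} for any g ≥ 0, where m_{σ,Q}(g) = σ(Q)^{−1} ∫_Q g σ dμ and M^d_σ is the dyadic maximal operator with respect to σ. -/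

import Mathlib

open MeasureTheory Set ENNReal

noncomputable section

private lemma key_sum {ι' : Type*} [Countable ι'] (T : ι' → ℝ≥0∞) (p : ℝ) (hp : 1 < p)
    (hband : ∀ a b : ι', a ≠ b → 2 * T b < T a ∨ 2 * T a < T b) :
    ∑' i, T i ^ (p - 1) ≤ ENNReal.ofReal ((1 - 2 ^ (1 - p))⁻¹) * (⨆ i, T i) ^ (p - 1) := by
  have hp1 : (0:ℝ) < p - 1 := by linarith
  have hr1 : (2:ℝ) ^ (1 - p) < 1 :=
    Real.rpow_lt_one_of_one_lt_of_neg one_lt_two (by linarith)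
  have hr0 : (0:ℝ) < 2 ^ (1 - p) := Real.rpow_pos_of_pos two_pos _
  have hC : (0:ℝ) < 1 - 2 ^ (1 - p) := by linarith
  set s := ⨆ i, T i with hs
  by_cases hstop : s = ∞
  · have hh : ENNReal.ofReal ((1 - 2 ^ (1 - p))⁻¹) * s ^ (p - 1) = ∞ := by
      rw [hstop, ENNReal.top_rpow_of_pos hp1, ENNReal.mul_top]
      simp only [ne_eq, ENNReal.ofReal_eq_zero, not_le]
      exact inv_pos.mpr hC
    rw [hh]; exact le_top
  · have hTle : ∀ i, T i ≤ s := le_iSup T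
    have hTfin : ∀ i, T i ≠ ∞ := fun i =>
      ((hTle i).trans_lt (lt_top_iff_ne_top.mpr hstop)).ne
    set r : ℝ≥0∞ := (2:ℝ≥0∞) ^ (1 - p) with hrdef
    set S0 : Set ι' := {i | T i ≠ 0} with hS0
    have hsupp : Function.support (fun i => T i ^ (p - 1)) ⊆ S0 := by
      intro i hi h0
      simp only [Function.mem_support] at hi
      exact hi (by rw [h0, ENNReal.zero_rpow_of_pos hp1])
    rw [← tsum_subtype_eq_of_support_subset hsupp]
    have hex : ∀ a : S0, ∃ n : ℕ, s < T a.1 * 2 ^ (n + 1) := by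
      intro a
      have h0 : T a.1 ≠ 0 := a.2
      have hlt : s / T a.1 < ∞ := ENNReal.div_lt_top hstop h0
      obtain ⟨n, hn⟩ := ENNReal.exists_nat_gt hlt.ne
      refine ⟨n, ?_⟩
      have h2 : (n : ℝ≥0∞) ≤ 2 ^ (n + 1) := by
        calc (n : ℝ≥0∞) ≤ ((2 ^ (n+1) : ℕ) : ℝ≥0∞) := by
              exact_mod_cast (Nat.lt_two_pow_self (n := n)).le.trans (Nat.pow_le_pow_right (by norm_num) (Nat.le_succ n))
          _ = 2 ^ (n + 1) := by push_cast; ring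
      have := (ENNReal.div_lt_iff (Or.inl h0) (Or.inl (hTfin a.1))).mp (hn.trans_le h2)
      rwa [mul_comm] at this
    set J : S0 → ℕ := fun a => Nat.find (hex a) with hJdef
    have hJ1 : ∀ a, s < T a.1 * 2 ^ (J a + 1) := fun a => Nat.find_spec (hex a)
    have hJ2 : ∀ a, T a.1 * 2 ^ (J a) ≤ s := by
      intro a
      rcases Nat.eq_zero_or_pos (J a) with h | h
      · rw [h]; simpa using hTle a.1
      · have hm := Nat.find_min (hex a) (m := J a - 1) (Nat.sub_lt h one_pos)
        have heq : J a - 1 + 1 = J a := by omega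
        rw [heq] at hm
        exact not_lt.mp hm
    have hJinj : Function.Injective J := by
      intro a b hab
      by_contra hne
      have h2n : (2:ℝ≥0∞) ^ (J a) ≠ 0 := pow_ne_zero _ (by norm_num)
      have h2t : (2:ℝ≥0∞) ^ (J a) ≠ ∞ := ENNReal.pow_ne_top (by norm_num)
      have hne' : a.1 ≠ b.1 := fun h => hne (Subtype.ext h)
      rcases hband a.1 b.1 hne' with h | h
      · have h1 := hJ1 b
        rw [← hab] at h1
        have heq : T b.1 * 2 ^ (J a + 1) = (2 * T b.1) * 2 ^ (J a) := by ring
        rw [heq] at h1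
        have hlt : (2 * T b.1) * 2 ^ (J a) < T a.1 * 2 ^ (J a) :=
          ENNReal.mul_lt_mul_left h2n h2t h
        exact absurd ((h1.trans hlt).trans_le (hJ2 a)) (lt_irrefl s)
      · have h1 := hJ1 a
        have heq : T a.1 * 2 ^ (J a + 1) = (2 * T a.1) * 2 ^ (J a) := by ring
        rw [heq] at h1
        have hlt : (2 * T a.1) * 2 ^ (J a) < T b.1 * 2 ^ (J a) :=
          ENNReal.mul_lt_mul_left h2n h2t h
        have h2' := hJ2 b
        rw [← hab] at h2'
        exact absurd ((h1.trans hlt).trans_le h2') (lt_irrefl s)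
    have hterm : ∀ a : S0, T a.1 ^ (p - 1) ≤ s ^ (p - 1) * r ^ (J a) := by
      intro a
      have h2n : (2:ℝ≥0∞) ^ (J a) ≠ 0 := pow_ne_zero _ (by norm_num)
      have h2t : (2:ℝ≥0∞) ^ (J a) ≠ ∞ := ENNReal.pow_ne_top (by norm_num)
      have hle : T a.1 ≤ s / 2 ^ (J a) :=
        (ENNReal.le_div_iff_mul_le (Or.inl h2n) (Or.inl h2t)).mpr (hJ2 a)
      have h1 : T a.1 ^ (p - 1) ≤ (s / 2 ^ (J a)) ^ (p - 1) :=
        ENNReal.rpow_le_rpow hle hp1.le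
      have h2 : (s / 2 ^ (J a)) ^ (p - 1) = s ^ (p - 1) * (((2:ℝ≥0∞) ^ (J a))⁻¹) ^ (p - 1) := by
        rw [div_eq_mul_inv, ENNReal.mul_rpow_of_nonneg _ _ hp1.le]
      have h3 : (((2:ℝ≥0∞) ^ (J a))⁻¹) ^ (p - 1) = r ^ (J a) := by
        rw [hrdef, ← ENNReal.rpow_natCast (2:ℝ≥0∞) (J a),
          ← ENNReal.rpow_neg, ← ENNReal.rpow_mul,
          ← ENNReal.rpow_natCast ((2:ℝ≥0∞) ^ (1 - p)) (J a), ← ENNReal.rpow_mul]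
        congr 1; ring
      rw [h2, h3] at h1
      exact h1
    have hCr : (1 - r)⁻¹ = ENNReal.ofReal ((1 - 2 ^ (1 - p))⁻¹) := by
      have hr : r = ENNReal.ofReal ((2:ℝ) ^ (1 - p)) := by
        rw [hrdef, ← ENNReal.ofReal_rpow_of_pos two_pos]
        norm_num
      rw [hr, ← ENNReal.ofReal_one, ← ENNReal.ofReal_sub _ hr0.le,
        ENNReal.ofReal_inv_of_pos hC]
    calc ∑' a : S0, T a.1 ^ (p - 1)
        ≤ ∑' a : S0, s ^ (p - 1) * r ^ (J a) := ENNReal.tsum_le_tsum hterm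
      _ = s ^ (p - 1) * ∑' a : S0, r ^ (J a) := ENNReal.tsum_mul_left
      _ ≤ s ^ (p - 1) * ∑' n : ℕ, r ^ n :=
          mul_le_mul_right (ENNReal.tsum_comp_le_tsum_of_injective hJinj (fun n => r ^ n)) _
      _ = s ^ (p - 1) * (1 - r)⁻¹ := by rw [ENNReal.tsum_geometric]
      _ = ENNReal.ofReal ((1 - 2 ^ (1 - p))⁻¹) * s ^ (p - 1) := by rw [hCr, mul_comm]

theorem stmt18 {X : Type*} [MeasurableSpace X] (μ : Measure X)
    (σ g : X → ℝ≥0∞) {ι : Type*} [Countable ι]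
    (Q : ι → Set X) (T : ι → ℝ≥0∞) (p : ℝ) (hp : 1 < p)
    (hinj : Function.Injective Q)
    (hchain : ∀ i j (x : X), x ∈ Q i → x ∈ Q j → Q i ⊆ Q j ∨ Q j ⊆ Q i)
    (hgap : ∀ i j, Q i ⊂ Q j → 2 * T j < T i) :
    (∀ x : X, ∑' i : {i // x ∈ Q i}, T i.1 ^ (p - 1)
        ≤ ENNReal.ofReal ((1 - 2 ^ (1 - p))⁻¹) *
            (⨆ i : {i // x ∈ Q i}, T i.1) ^ (p - 1)) ∧
      ∀ x : X, ∑' i : {i // x ∈ Q i},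
          T i.1 ^ (p - 1) *
            ((∫⁻ y in Q i.1, g y * σ y ∂μ) / ∫⁻ y in Q i.1, σ y ∂μ)
        ≤ ENNReal.ofReal ((1 - 2 ^ (1 - p))⁻¹) *
            (⨆ i : {i // x ∈ Q i},
              (∫⁻ y in Q i.1, g y * σ y ∂μ) / ∫⁻ y in Q i.1, σ y ∂μ) *
            (⨆ i : {i // x ∈ Q i}, T i.1) ^ (p - 1) := by
  have main : ∀ x : X, ∑' i : {i // x ∈ Q i}, T i.1 ^ (p - 1)
      ≤ ENNReal.ofReal ((1 - 2 ^ (1 - p))⁻¹) *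
          (⨆ i : {i // x ∈ Q i}, T i.1) ^ (p - 1) := by
    intro x
    apply key_sum (fun i : {i // x ∈ Q i} => T i.1) p hp
    intro a b hne
    have hne' : a.1 ≠ b.1 := fun h => hne (Subtype.ext h)
    have hQne : Q a.1 ≠ Q b.1 := fun h => hne' (hinj h)
    rcases hchain a.1 b.1 x a.2 b.2 with h | h
    · exact Or.inl (hgap a.1 b.1 (h.ssubset_of_ne hQne))
    · exact Or.inr (hgap b.1 a.1 (h.ssubset_of_ne (Ne.symm hQne)))
  refine ⟨main, fun x => ?_⟩
  set m : {i // x ∈ Q i} → ℝ≥0∞ :=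
    fun i => (∫⁻ y in Q i.1, g y * σ y ∂μ) / ∫⁻ y in Q i.1, σ y ∂μ with hm
  calc ∑' i : {i // x ∈ Q i}, T i.1 ^ (p - 1) * m i
      ≤ ∑' i : {i // x ∈ Q i}, T i.1 ^ (p - 1) * (⨆ j, m j) :=
        ENNReal.tsum_le_tsum fun i => mul_le_mul_right (le_iSup m i) _
    _ = (∑' i : {i // x ∈ Q i}, T i.1 ^ (p - 1)) * (⨆ j, m j) := ENNReal.tsum_mul_right
    _ ≤ (ENNReal.ofReal ((1 - 2 ^ (1 - p))⁻¹) *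
          (⨆ i : {i // x ∈ Q i}, T i.1) ^ (p - 1)) * (⨆ j, m j) :=
        mul_le_mul_left (main x) _
    _ = ENNReal.ofReal ((1 - 2 ^ (1 - p))⁻¹) * (⨆ j, m j) *
          (⨆ i : {i // x ∈ Q i}, T i.1) ^ (p - 1) := by ring
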